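/- Let X be a compact Hausdorff space, A a Banach algebra, and τ ∈ Hom(C(X,A)) such that T_{x₀} ∘ τ = τ̃_{x₀} ∘ T_{x₀} for some x₀ ∈ X. If C(X,A) is τ-amenable, then A is τ̃_{x₀}-amenable. -/

import Mathlib

/-- A Banach `A`-bimodule: continuous bilinear left and right actions
(`smulL a x = a·x`, `smulR a x = x·a`) which are associative and commute. -/
structure BanachBimodule (A : Type u) [NonUnitalNormedRing A] [NormedSpace ℂ A]
    (E : Type v) [NormedAddCommGroup E] [NormedSpace ℂ E] : Type (max u v) where
  smulL : A →L[ℂ] E →L[ℂ] E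
  smulR : A →L[ℂ] E →L[ℂ] E
  smulL_mul : ∀ a b x, smulL (a * b) x = smulL a (smulL b x)
  smulR_mul : ∀ a b x, smulR (a * b) x = smulR b (smulR a x)
  smul_assoc : ∀ a b x, smulL a (smulR b x) = smulR b (smulL a x)

/-- `σ`-amenability of a Banach algebra `B`: for every Banach `B`-bimodule `E`,
every (bounded) `σ`-derivation `D : B → E*` into the dual bimodule is `σ`-inner.
The dual actions are `(b·Λ)(x) = Λ(x·b)` and `(Λ·b)(x) = Λ(b·x)`. -/
def SigmaAmenable (B : Type u) [NonUnitalNormedRing B] [NormedSpace ℂ B]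
    (s : B → B) : Prop :=
  ∀ (E : Type u) (_ : NormedAddCommGroup E) (_ : NormedSpace ℂ E)
    (_ : CompleteSpace E) (M : BanachBimodule B E)
    (D : B →L[ℂ] (E →L[ℂ] ℂ)),
    (∀ a b x, D (a * b) x = D a (M.smulL (s b) x) + D b (M.smulR (s a) x)) →
    ∃ Λ : E →L[ℂ] ℂ, ∀ a x, D a x = Λ (M.smulR (s a) x) - Λ (M.smulL (s a) x)

/-- if `τ ∈ Hom(C(X,A))` satisfies `T_{x₀} ∘ τ = τ̃_{x₀} ∘ T_{x₀}`
for some `x₀ ∈ X` (where `τ̃_{x₀}(a) = τ(1_a)(x₀)`), and `C(X,A)` is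
`τ`-amenable, then `A` is `τ̃_{x₀}`-amenable. -/
theorem stmt5 {X : Type u} {A : Type u} [TopologicalSpace X] [CompactSpace X]
    [T2Space X] [NonUnitalNormedRing A] [NormedSpace ℂ A] [IsScalarTower ℂ A A]
    [SMulCommClass ℂ A A] [CompleteSpace A]
    (τ : C(X, A) →L[ℂ] C(X, A)) (hτ : ∀ f g : C(X, A), τ (f * g) = τ f * τ g)
    (x₀ : X)
    (τx : A →L[ℂ] A) (hτx : ∀ a : A, τx a = τ (ContinuousMap.const X a) x₀)
    (hcomm : ∀ f : C(X, A), τ f x₀ = τx (f x₀))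
    (hCXA : SigmaAmenable C(X, A) τ) : SigmaAmenable A τx := by
  intro E _ _ _ M D hD
  -- evaluation at x₀ as a continuous linear map
  let ev : C(X, A) →L[ℂ] A :=
    LinearMap.mkContinuous
      { toFun := fun f => f x₀
        map_add' := fun f g => rfl
        map_smul' := fun c f => rfl } 1
      (fun f => by simpa using f.norm_coe_le_norm x₀)
  have hev : ∀ f : C(X, A), ev f = f x₀ := fun f => rfl
  -- pull back the bimodule structure along ev
  let M' : BanachBimodule C(X, A) E :=
    { smulL := M.smulL.comp ev
      smulR := M.smulR.comp ev
      smulL_mul := fun f g x => by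
        simp only [ContinuousLinearMap.comp_apply, hev, ContinuousMap.mul_apply]
        exact M.smulL_mul _ _ _
      smulR_mul := fun f g x => by
        simp only [ContinuousLinearMap.comp_apply, hev, ContinuousMap.mul_apply]
        exact M.smulR_mul _ _ _
      smul_assoc := fun f g x => by
        simp only [ContinuousLinearMap.comp_apply, hev]
        exact M.smul_assoc _ _ _ }
  obtain ⟨Λ, hΛ⟩ := hCXA E ‹_› ‹_› ‹_› M' (D.comp ev) (by
    intro f g x
    simp only [M', ContinuousLinearMap.comp_apply, hev, ContinuousMap.mul_apply]
    rw [hD (f x₀) (g x₀) x, ← hcomm f, ← hcomm g])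
  refine ⟨Λ, fun a x => ?_⟩
  have := hΛ (ContinuousMap.const X a) x
  simp only [M', ContinuousLinearMap.comp_apply, hev, ContinuousMap.const_apply] at this
  rw [this, hcomm (ContinuousMap.const X a)]
  rfl
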